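/- Let ψ : ℝ^M → ℂ^D be a differentiable family of unit vectors, fix θ* ∈ ℝ^M, and let 0 < t ≤ 1. Define the Kraus operator K = (t − 1)·ψ(θ*)ψ(θ*)† + I, so that F = K†K = (t² − 1)·ψ(θ*)ψ(θ*)† + I, and set p(θ) = ⟨ψ(θ), F ψ(θ)⟩ and ψ^{ps}(θ) = K ψ(θ)/√(p(θ)). Then the postselection probability at θ* is p(θ*) = t², and the postselected pure-state QFIM at θ* satisfies, for all i, j: 𝓘_{ij}(θ* | ψ^{ps}) = (1/t²) · 𝓘_{ij}(θ* | ψ). -/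

import Mathlib

noncomputable section

open Matrix

/-- Standard Hermitian inner product on `ℂ^D`, conjugate-linear in the first argument. -/
def dotc {D : ℕ} (x y : Fin D → ℂ) : ℂ := ∑ d, starRingEnd ℂ (x d) * y d

/-- Partial derivative of a parametrized family with respect to the `i`-th parameter. -/
def pder {M D : ℕ} (i : Fin M) (φ : (Fin M → ℝ) → (Fin D → ℂ)) (θ : Fin M → ℝ) :
    Fin D → ℂ :=
  fderiv ℝ φ θ (Pi.single i 1)

/-- Pure-state quantum Fisher information matrix entry
`𝓘_{ij}(θ|φ) = 4 Re[⟨∂_iφ,∂_jφ⟩ − ⟨∂_iφ,φ⟩⟨φ,∂_jφ⟩]`. -/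
def qfim {M D : ℕ} (φ : (Fin M → ℝ) → (Fin D → ℂ)) (θ : Fin M → ℝ) (i j : Fin M) : ℝ :=
  4 * (dotc (pder i φ θ) (pder j φ θ) -
        dotc (pder i φ θ) (φ θ) * dotc (φ θ) (pder j φ θ)).re

section DotcAux

variable {M D : ℕ}

lemma dotc_add_right (x y z : Fin D → ℂ) : dotc x (y + z) = dotc x y + dotc x z := by
  simp [dotc, mul_add, Finset.sum_add_distrib]

lemma dotc_add_left (x y z : Fin D → ℂ) : dotc (x + y) z = dotc x z + dotc y z := by
  simp [dotc, add_mul, Finset.sum_add_distrib]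

lemma dotc_smul_right (c : ℂ) (x y : Fin D → ℂ) : dotc x (c • y) = c * dotc x y := by
  simp only [dotc, Pi.smul_apply, smul_eq_mul, Finset.mul_sum]
  exact Finset.sum_congr rfl fun d _ => by ring

lemma dotc_smul_left (c : ℂ) (x y : Fin D → ℂ) :
    dotc (c • x) y = starRingEnd ℂ c * dotc x y := by
  simp only [dotc, Pi.smul_apply, smul_eq_mul, Finset.mul_sum]
  exact Finset.sum_congr rfl fun d _ => by rw [_root_.map_mul]; ring

lemma dotc_rsmul_right (r : ℝ) (x y : Fin D → ℂ) : dotc x (r • y) = (r : ℂ) * dotc x y := by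
  rw [show r • y = (r : ℂ) • y by ext d; simp [Complex.real_smul], dotc_smul_right]

lemma dotc_rsmul_left (r : ℝ) (x y : Fin D → ℂ) : dotc (r • x) y = (r : ℂ) * dotc x y := by
  rw [show r • x = (r : ℂ) • x by ext d; simp [Complex.real_smul], dotc_smul_left]
  simp [Complex.conj_ofReal]

lemma dotc_conj (x y : Fin D → ℂ) : starRingEnd ℂ (dotc x y) = dotc y x := by
  simp [dotc, map_sum, mul_comm]

/-- `dotc x ·` as a `ℂ`-linear map. -/
def dotcL (x : Fin D → ℂ) : (Fin D → ℂ) →ₗ[ℂ] ℂ where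
  toFun y := dotc x y
  map_add' y z := dotc_add_right x y z
  map_smul' c y := by simp [dotc_smul_right]

/-- `dotc x ·` as an `ℝ`-continuous-linear map. -/
def dotcR (x : Fin D → ℂ) : (Fin D → ℂ) →L[ℝ] ℂ :=
  LinearMap.toContinuousLinearMap ((dotcL x).restrictScalars ℝ)

@[simp] lemma dotcR_apply (x y : Fin D → ℂ) : dotcR x y = dotc x y := rfl

/-- conjugation as `ℝ`-CLM -/
def conjCLM : ℂ →L[ℝ] ℂ := Complex.conjCLE.toContinuousLinearMap

@[simp] lemma conjCLM_apply (z : ℂ) : conjCLM z = starRingEnd ℂ z := rfl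

lemma hasFDerivAt_dotc {f g : (Fin M → ℝ) → Fin D → ℂ}
    {f' g' : (Fin M → ℝ) →L[ℝ] (Fin D → ℂ)} {θ : Fin M → ℝ}
    (hf : HasFDerivAt f f' θ) (hg : HasFDerivAt g g' θ) :
    HasFDerivAt (fun θ' => dotc (f θ') (g θ'))
      (conjCLM ∘L (dotcR (g θ)) ∘L f' + (dotcR (f θ)) ∘L g') θ := by
  have h1 : ∀ d : Fin D, HasFDerivAt (fun θ' => starRingEnd ℂ (f θ' d))
      (conjCLM ∘L (ContinuousLinearMap.proj d) ∘L f') θ := fun d => by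
    simpa [Function.comp_def] using
      conjCLM.hasFDerivAt.comp θ ((ContinuousLinearMap.proj d).hasFDerivAt.comp θ hf)
  have h2 : ∀ d : Fin D, HasFDerivAt (fun θ' => g θ' d)
      ((ContinuousLinearMap.proj d) ∘L g') θ := fun d => by
    simpa [Function.comp_def] using (ContinuousLinearMap.proj d).hasFDerivAt.comp θ hg
  have H := HasFDerivAt.fun_sum (u := Finset.univ)
    (A := fun d θ' => starRingEnd ℂ (f θ' d) * g θ' d)
    (A' := fun d => starRingEnd ℂ (f θ d) • ((ContinuousLinearMap.proj d) ∘L g')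
      + g θ d • (conjCLM ∘L (ContinuousLinearMap.proj d) ∘L f'))
    (fun d _ => (h1 d).mul (h2 d))
  have hfun : (fun θ' => ∑ d, starRingEnd ℂ (f θ' d) * g θ' d)
      = fun θ' => dotc (f θ') (g θ') := rfl
  rw [hfun] at H
  refine H.congr_fderiv (Eq.symm ?_)
  ext h
  simp only [ContinuousLinearMap.add_apply, ContinuousLinearMap.coe_sum', Finset.sum_apply,
    ContinuousLinearMap.add_apply, ContinuousLinearMap.smul_apply, ContinuousLinearMap.comp_apply,
    ContinuousLinearMap.proj_apply, conjCLM_apply, dotcR_apply, dotc, map_sum, smul_eq_mul]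
  rw [Finset.sum_add_distrib, add_comm]
  congr 1
  exact Finset.sum_congr rfl fun d _ => by rw [_root_.map_mul, Complex.conj_conj]

end DotcAux

/-- **Theorem 2 of the paper (exact, δ = 0 case).** With the Kraus operator
`K = (t−1)|ψ(θ*)⟩⟨ψ(θ*)| + I`, the postselection probability at `θ*` is `t²`,
`F = K†K = (t²−1)|ψ(θ*)⟩⟨ψ(θ*)| + I`, and the postselected QFIM at `θ*` is the original
QFIM amplified by the factor `1/t²`. -/
theorem distilled_qfim_amplification
    (M D : ℕ) (ψ : (Fin M → ℝ) → (Fin D → ℂ))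
    (hψ : Differentiable ℝ ψ)
    (hunit : ∀ θ, dotc (ψ θ) (ψ θ) = 1)
    (θstar : Fin M → ℝ) (t : ℝ) (ht0 : 0 < t) (ht1 : t ≤ 1)
    (P : Matrix (Fin D) (Fin D) ℂ)
    (hP : P = vecMulVec (ψ θstar) (star (ψ θstar)))
    (K : Matrix (Fin D) (Fin D) ℂ)
    (hK : K = ((t : ℂ) - 1) • P + 1)
    (F : Matrix (Fin D) (Fin D) ℂ) (hF : F = Kᴴ * K)
    (p : (Fin M → ℝ) → ℝ)
    (hp : ∀ θ, p θ = (dotc (ψ θ) (F.mulVec (ψ θ))).re)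
    (ψps : (Fin M → ℝ) → (Fin D → ℂ))
    (hψps : ∀ θ', ψps θ' = (Real.sqrt (p θ'))⁻¹ • K.mulVec (ψ θ')) :
    F = (((t : ℂ) ^ 2 - 1) • P + 1) ∧
    p θstar = t ^ 2 ∧
    ∀ i j, qfim ψps θstar i j = (1 / t ^ 2) * qfim ψ θstar i j := by
  have htC : (t : ℂ) ≠ 0 := by exact_mod_cast ht0.ne'
  have hvv : dotc (ψ θstar) (ψ θstar) = 1 := hunit θstar
  have hPmul : ∀ x : Fin D → ℂ, P.mulVec x = (dotc (ψ θstar) x) • (ψ θstar) := by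
    intro x; ext d
    simp only [hP, Matrix.mulVec, dotProduct, Matrix.vecMulVec_apply, Pi.star_apply,
      Pi.smul_apply, smul_eq_mul, dotc, Finset.mul_sum, RCLike.star_def]
    rw [Finset.sum_mul]
    exact Finset.sum_congr rfl fun k _ => by ring
  have hPH : Pᴴ = P := by
    rw [hP]; ext i j
    simp [Matrix.conjTranspose_apply, Matrix.vecMulVec_apply, mul_comm]
  have hPP : P * P = P := by
    rw [hP]; ext i j
    simp only [Matrix.mul_apply, Matrix.vecMulVec_apply, Pi.star_apply, RCLike.star_def]
    have : ∀ k, ψ θstar i * starRingEnd ℂ (ψ θstar k) * (ψ θstar k * starRingEnd ℂ (ψ θstar j))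
        = (ψ θstar i * starRingEnd ℂ (ψ θstar j)) * (starRingEnd ℂ (ψ θstar k) * ψ θstar k) := by
      intro k; ring
    rw [Finset.sum_congr rfl fun k _ => this k, ← Finset.mul_sum]
    have : ∑ k, starRingEnd ℂ (ψ θstar k) * ψ θstar k = 1 := hvv
    rw [this, mul_one]
  have hFP : F = (((t : ℂ) ^ 2 - 1) • P + 1) := by
    have hconj : starRingEnd ℂ ((t : ℂ) - 1) = (t : ℂ) - 1 := by
      simp [Complex.conj_ofReal]
    rw [hF, hK, conjTranspose_add, conjTranspose_smul, conjTranspose_one, hPH]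
    rw [show (star ((t:ℂ)-1)) = (t:ℂ)-1 from hconj]
    rw [add_mul, mul_add, mul_add, one_mul, mul_one, smul_mul_assoc, mul_smul_comm, hPP,
      smul_smul, one_mul, ← add_smul, ← add_assoc, ← add_smul]
    congr 1
    congr 1
    ring
  have hFmul' : ∀ x, F.mulVec x = (((t:ℂ)^2 - 1) * dotc (ψ θstar) x) • ψ θstar + x := fun x => by
    rw [hFP, Matrix.add_mulVec, Matrix.smul_mulVec, Matrix.one_mulVec, hPmul, smul_smul]
  have hpθ : p θstar = t ^ 2 := by
    rw [hp, hFmul', dotc_add_right, dotc_smul_right, hvv]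
    norm_num [← Complex.ofReal_pow]
  refine ⟨hFP, hpθ, ?_⟩
  have hKmul : ∀ x, K.mulVec x = (((t:ℂ) - 1) * dotc (ψ θstar) x) • ψ θstar + x := fun x => by
    rw [hK, Matrix.add_mulVec, Matrix.smul_mulVec, Matrix.one_mulVec, hPmul, smul_smul]
  have hDψ : HasFDerivAt ψ (fderiv ℝ ψ θstar) θstar := (hψ θstar).hasFDerivAt
  set Dψ := fderiv ℝ ψ θstar with hDψdef
  have key0 : ∀ h, starRingEnd ℂ (dotc (ψ θstar) (Dψ h)) + dotc (ψ θstar) (Dψ h) = 0 := by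
    have h1 := hasFDerivAt_dotc hDψ hDψ
    have h2 : HasFDerivAt (fun θ' => dotc (ψ θ') (ψ θ')) (0 : (Fin M → ℝ) →L[ℝ] ℂ) θstar := by
      rw [show (fun θ' => dotc (ψ θ') (ψ θ')) = fun _ => (1:ℂ) from funext hunit]
      exact hasFDerivAt_const 1 θstar
    have heq := h1.unique h2
    intro h
    have := congrFun (congrArg DFunLike.coe heq) h
    simpa using this
  let FL : (Fin D → ℂ) →L[ℝ] (Fin D → ℂ) :=
    LinearMap.toContinuousLinearMap ((Matrix.mulVecLin F).restrictScalars ℝ)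
  have hFLapp : ∀ x, FL x = F.mulVec x := fun x => rfl
  have hFψ : HasFDerivAt (fun θ' => F.mulVec (ψ θ')) (FL ∘L Dψ) θstar := by
    simpa [Function.comp_def, hFLapp] using FL.hasFDerivAt.comp θstar hDψ
  have hdp := hasFDerivAt_dotc hDψ hFψ
  have hLp : HasFDerivAt p (Complex.reCLM ∘L
      (conjCLM ∘L (dotcR (F.mulVec (ψ θstar))) ∘L Dψ + (dotcR (ψ θstar)) ∘L (FL ∘L Dψ))) θstar := by
    rw [show p = fun θ' => (dotc (ψ θ') (F.mulVec (ψ θ'))).re from funext hp]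
    simpa [Function.comp_def] using Complex.reCLM.hasFDerivAt.comp θstar hdp
  have hp0 : HasFDerivAt p (0 : (Fin M → ℝ) →L[ℝ] ℝ) θstar := by
    convert hLp using 1
    symm
    ext h
    simp only [ContinuousLinearMap.comp_apply, ContinuousLinearMap.add_apply,
      conjCLM_apply, dotcR_apply, Complex.reCLM_apply, ContinuousLinearMap.zero_apply, hFLapp]
    have e1 : starRingEnd ℂ (dotc (F.mulVec (ψ θstar)) (Dψ h))
        + dotc (ψ θstar) (F.mulVec (Dψ h))
        = ((t:ℂ)^2) * (starRingEnd ℂ (dotc (ψ θstar) (Dψ h)) + dotc (ψ θstar) (Dψ h)) := by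
      simp only [hFmul', dotc_add_left, dotc_add_right, dotc_smul_left, dotc_smul_right, hvv,
        map_add, _root_.map_mul, Complex.conj_conj, mul_one]
      ring
    rw [e1, key0 h, mul_zero, Complex.zero_re]
  have hsqrtp : Real.sqrt (p θstar) = t := by rw [hpθ, Real.sqrt_sq ht0.le]
  have hg0 : HasFDerivAt (fun θ' => (Real.sqrt (p θ'))⁻¹) (0 : (Fin M → ℝ) →L[ℝ] ℝ) θstar := by
    have hne : p θstar ≠ 0 := by rw [hpθ]; positivity
    have hs := (Real.hasDerivAt_sqrt hne).inv (by rw [hsqrtp]; exact ht0.ne')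
    have h2 := hs.comp_hasFDerivAt θstar hp0
    simpa [Function.comp_def] using h2
  let KL : (Fin D → ℂ) →L[ℝ] (Fin D → ℂ) :=
    LinearMap.toContinuousLinearMap ((Matrix.mulVecLin K).restrictScalars ℝ)
  have hKLapp : ∀ x, KL x = K.mulVec x := fun x => rfl
  have hKψ : HasFDerivAt (fun θ' => K.mulVec (ψ θ')) (KL ∘L Dψ) θstar := by
    simpa [Function.comp_def, hKLapp] using KL.hasFDerivAt.comp θstar hDψ
  have hDps : HasFDerivAt ψps ((t⁻¹ : ℝ) • (KL ∘L Dψ)) θstar := by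
    have h := hg0.fun_smul hKψ
    rw [show (fun θ' => (Real.sqrt (p θ'))⁻¹ • K.mulVec (ψ θ')) = ψps
      from funext fun θ' => (hψps θ').symm] at h
    have hzero : (0 : (Fin M → ℝ) →L[ℝ] ℝ).smulRight (K.mulVec (ψ θstar)) = 0 := by
      ext z; simp
    rw [hzero, add_zero, hsqrtp] at h
    exact h
  have hpder : ∀ i, pder i ψps θstar = (t⁻¹ : ℝ) • K.mulVec (Dψ (Pi.single i 1)) := by
    intro i
    show fderiv ℝ ψps θstar (Pi.single i 1) = _
    rw [hDps.fderiv]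
    simp [hKLapp]
  have hψpsθ : ψps θstar = ψ θstar := by
    rw [hψps θstar, hsqrtp, hKmul, hvv, mul_one]
    ext d
    simp only [Pi.smul_apply, Pi.add_apply, smul_eq_mul, Complex.real_smul]
    push_cast
    field_simp
    ring
  intro i j
  have hwi : pder i ψ θstar = Dψ (Pi.single i 1) := rfl
  have hwj : pder j ψ θstar = Dψ (Pi.single j 1) := rfl
  set wi := Dψ (Pi.single i 1) with hwidef
  set wj := Dψ (Pi.single j 1) with hwjdef
  rw [qfim, qfim, hpder i, hpder j, hψpsθ, hwi, hwj]
  have hZ : dotc ((t⁻¹:ℝ) • K.mulVec wi) ((t⁻¹:ℝ) • K.mulVec wj)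
      - dotc ((t⁻¹:ℝ) • K.mulVec wi) (ψ θstar) * dotc (ψ θstar) ((t⁻¹:ℝ) • K.mulVec wj)
      = ((1 / t^2 : ℝ) : ℂ) * (dotc wi wj - dotc wi (ψ θstar) * dotc (ψ θstar) wj) := by
    rw [hKmul wi, hKmul wj]
    rw [dotc_rsmul_left, dotc_rsmul_right, dotc_rsmul_left, dotc_rsmul_right]
    simp only [dotc_add_left, dotc_add_right, dotc_smul_left, dotc_smul_right, hvv,
      _root_.map_mul, mul_one]
    rw [show starRingEnd ℂ ((t:ℂ) - 1) = (t:ℂ) - 1 by simp [Complex.conj_ofReal]]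
    push_cast
    field_simp
    ring
  rw [hZ, Complex.re_ofReal_mul]
  ring

end
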